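/- Since the Lambert W function satisfies W(x)e^{W(x)} = x for x > 0, for any constants n, v_T, i_s > 0 and any v ∈ ℝ, the value i = n·v_T·W((i_s/(n·v_T))·exp((v + i_s)/(n·v_T))) - i_s satisfies v = i + n·v_T·log(i/i_s + 1). That is, the diode ReLU is the resolvent of the Shockley diode impedance. -/

import Mathlib

/-- The diode ReLU is the resolvent of the Shockley diode impedance: if `W`
satisfies `W(x) e^{W(x)} = x` and `W(x) > 0` for `x > 0`, then for positive
constants `n, vT, is` and any `v`, the value
`i = n vT W((is/(n vT)) exp((v + is)/(n vT))) - is` satisfies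
`v = i + n vT log(i/is + 1)`. -/
theorem diode_relu_resolvent (W : ℝ → ℝ)
    (hW : ∀ x > 0, W x * Real.exp (W x) = x)
    (hWpos : ∀ x > 0, 0 < W x)
    (n vT is : ℝ) (hn : 0 < n) (hvT : 0 < vT) (his : 0 < is) (v : ℝ) :
    v = (n * vT * W (is / (n * vT) * Real.exp ((v + is) / (n * vT))) - is) +
        n * vT * Real.log
          ((n * vT * W (is / (n * vT) * Real.exp ((v + is) / (n * vT))) - is) / is + 1) := by
  set c := n * vT with hc
  have hcpos : 0 < c := mul_pos hn hvT
  set x := is / c * Real.exp ((v + is) / c) with hx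
  have hxpos : 0 < x := mul_pos (div_pos his hcpos) (Real.exp_pos _)
  set w := W x with hw
  have hwpos : 0 < w := hWpos x hxpos
  have hwe : w * Real.exp w = x := hW x hxpos
  have h1 : c * w * Real.exp w = is * Real.exp ((v + is) / c) := by
    rw [mul_assoc, hwe, hx]
    field_simp
  have key : c * w / is = Real.exp ((v + is) / c - w) := by
    rw [Real.exp_sub]
    rw [div_eq_div_iff his.ne' (Real.exp_pos w).ne']
    linear_combination h1
  have hlog : Real.log ((c * w - is) / is + 1) = (v + is) / c - w := by
    have : (c * w - is) / is + 1 = c * w / is := by field_simp; ring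
    rw [this, key, Real.log_exp]
  rw [hlog]
  field_simp
  ring
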